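/- (Eigencircuits of the maximal common-cause indicator.) Let d ≥ 2. A process comb J yields the outcome j with probability 1 under the common-cause indicator with identity unitaries, i.e. (1/d) Tr[J · ((|Φ_j⟩⟨Φ_j|)_{AC} ⊗ I_B)] = 1, if and only if J = |Φ_j⟩⟨Φ_j|_{AC} ⊗ I_B; in particular every eigencircuit of the common-cause indicator prepares a maximally entangled state between A and C, independent of B. -/

import Mathlib

open Matrix BigOperators ComplexOrder

noncomputable section

/-- Index type for the three systems A, B, C. -/
abbrev PIdx (dA dB dC : ℕ) := Fin dA × Fin dB × Fin dC

/-- Matrices on `ℂ^{dA} ⊗ ℂ^{dB} ⊗ ℂ^{dC}`. -/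
abbrev PMat (dA dB dC : ℕ) := Matrix (PIdx dA dB dC) (PIdx dA dB dC) ℂ

/-- Partial trace over the third (C) tensor factor. -/
def trC {dA dB dC : ℕ} (M : PMat dA dB dC) :
    Matrix (Fin dA × Fin dB) (Fin dA × Fin dB) ℂ :=
  Matrix.of fun i j => ∑ c : Fin dC, M (i.1, i.2, c) (j.1, j.2, c)

/-- Partial trace over the second tensor factor of a bipartite matrix. -/
def trSnd {d₁ d₂ : ℕ} (M : Matrix (Fin d₁ × Fin d₂) (Fin d₁ × Fin d₂) ℂ) :
    Matrix (Fin d₁) (Fin d₁) ℂ :=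
  Matrix.of fun a a' => ∑ b : Fin d₂, M (a, b) (a', b)

/-- A process comb: a PSD matrix `J` on A ⊗ B ⊗ C with `Tr_C J = ρ_A ⊗ I_B`
for some state `ρ_A`. -/
def IsProcessComb {dA dB dC : ℕ} (J : PMat dA dB dC) : Prop :=
  J.PosSemidef ∧ ∃ ρ : Matrix (Fin dA) (Fin dA) ℂ,
    ρ.PosSemidef ∧ ρ.trace = 1 ∧
    trC J = Matrix.of fun i j => ρ i.1 j.1 * (if i.2 = j.2 then (1 : ℂ) else 0)

/-- A tester with `m` outcomes: PSD matrices `T x` with `∑ x, T x = Λ ⊗ I_C`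
for some PSD `Λ` on A ⊗ B with `Tr_B Λ = I_A`. -/
def IsTester {dA dB dC m : ℕ} (T : Fin m → PMat dA dB dC) : Prop :=
  (∀ x, (T x).PosSemidef) ∧
  ∃ Λ : Matrix (Fin dA × Fin dB) (Fin dA × Fin dB) ℂ,
    Λ.PosSemidef ∧ trSnd Λ = 1 ∧
    (∑ x, T x) = Matrix.of fun i j =>
      Λ (i.1, i.2.1) (j.1, j.2.1) * (if i.2.2 = j.2.2 then (1 : ℂ) else 0)

/-- Outcome probability `Tr[J T]` (as a real number). -/
def prob {dA dB dC : ℕ} (J T : PMat dA dB dC) : ℝ := ((J * T).trace).re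

/-- `P_k`: Bob's optimal winning probability in the quantum roulette with `k` chips,
for the pair of testers `T`, `S`. -/
def rouletteP {dA dB dC m : ℕ} (T S : Fin m → PMat dA dB dC) (k : ℕ) : ℝ :=
  sSup { r : ℝ | ∃ J : PMat dA dB dC, IsProcessComb J ∧
    ∃ G : Finset (Fin 2 × Fin m), G.card = k ∧
      r = ∑ g ∈ G, (1 / 2 : ℝ) * prob J (if g.1 = 0 then T g.2 else S g.2) }

/-- The roulette vector `w ∈ ℝ^{2m}`, `w_k = P_k - P_{k-1}`. -/
def rouletteW {dA dB dC m : ℕ} (T S : Fin m → PMat dA dB dC) : Fin (m + m) → ℝ :=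
  fun k => rouletteP T S (k.1 + 1) - rouletteP T S k.1

/-- Sum of the `k` largest entries of a (nonnegative) vector, padding with zeros. -/
def kMaxSum {n : ℕ} (u : Fin n → ℝ) (k : ℕ) : ℝ :=
  sSup { r : ℝ | ∃ A : Finset (Fin n), A.card = min k n ∧ r = ∑ i ∈ A, u i }

/-- `MajorizedBy u v` means `u ≺ v`: every partial sum of the `k` largest entries of `u`
is at most that of `v`, and the total sums agree. -/
def MajorizedBy {m n : ℕ} (u : Fin m → ℝ) (v : Fin n → ℝ) : Prop :=
  (∀ k : ℕ, kMaxSum u k ≤ kMaxSum v k) ∧ ∑ i, u i = ∑ i, v i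

/-- Base-2 Shannon entropy of a finite vector. -/
def H2 {n : ℕ} (p : Fin n → ℝ) : ℝ := -∑ i, p i * Real.logb 2 (p i)

/-- Rank-one projector `|φ⟩⟨φ|` on a bipartite system. -/
def projMat {d : ℕ} (φ : Fin d × Fin d → ℂ) :
    Matrix (Fin d × Fin d) (Fin d × Fin d) ℂ :=
  Matrix.of fun x y => φ x * (starRingEnd ℂ) (φ y)

/-- Embed an operator on A ⊗ C as an operator on A ⊗ B ⊗ C acting as the identity on B. -/
def embAC {d : ℕ} (M : Matrix (Fin d × Fin d) (Fin d × Fin d) ℂ) : PMat d d d :=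
  Matrix.of fun i j => M (i.1, i.2.2) (j.1, j.2.2) * (if i.2.1 = j.2.1 then (1 : ℂ) else 0)

/-- Embed an operator on B ⊗ C as an operator on A ⊗ B ⊗ C acting as the identity on A. -/
def embBC {d : ℕ} (M : Matrix (Fin d × Fin d) (Fin d × Fin d) ℂ) : PMat d d d :=
  Matrix.of fun i j => M (i.2.1, i.2.2) (j.2.1, j.2.2) * (if i.1 = j.1 then (1 : ℂ) else 0)

/-- `(U ⊗ V) |φ⟩` for a bipartite vector `φ`. -/
def kronVec {d : ℕ} (U V : Matrix (Fin d) (Fin d) ℂ) (φ : Fin d × Fin d → ℂ) :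
    Fin d × Fin d → ℂ :=
  fun x => ∑ y : Fin d × Fin d, U x.1 y.1 * V x.2 y.2 * φ y

/-- An orthonormal basis `{Φ_i}` of `ℂ^d ⊗ ℂ^d` consisting of maximally entangled vectors,
with `Φ_1 = (1/√d) ∑_k |kk⟩`. -/
def IsMaxEntBasis {d : ℕ} (Φ : Fin (d * d) → Fin d × Fin d → ℂ) : Prop :=
  (∀ i j, ∑ x : Fin d × Fin d, (starRingEnd ℂ) (Φ i x) * Φ j x
      = if i = j then (1 : ℂ) else 0) ∧
  (∀ i a a', ∑ b : Fin d, Φ i (a, b) * (starRingEnd ℂ) (Φ i (a', b))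
      = if a = a' then (1 : ℂ) / d else 0) ∧
  (∀ i b b', ∑ a : Fin d, Φ i (a, b) * (starRingEnd ℂ) (Φ i (a, b'))
      = if b = b' then (1 : ℂ) / d else 0) ∧
  ∀ (h : 0 < d * d) (x : Fin d × Fin d),
    Φ ⟨0, h⟩ x = if x.1 = x.2 then ((1 / Real.sqrt d : ℝ) : ℂ) else 0

/-- Outcome distribution of the common-cause indicator `T_CC(U₁, U₂)` on a process comb:
`p_i = (1/d) Tr[J ((U₁⊗U₂)|Φ_i⟩⟨Φ_i|(U₁⊗U₂)†)_{AC} ⊗ I_B]`. -/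
def ccProb {d : ℕ} (U₁ U₂ : Matrix (Fin d) (Fin d) ℂ)
    (Φ : Fin (d * d) → Fin d × Fin d → ℂ) (J : PMat d d d) : Fin (d * d) → ℝ :=
  fun i => (1 / d) * prob J (embAC (projMat (kronVec U₁ U₂ (Φ i))))

/-- Outcome distribution of the direct-cause indicator `T_DC(U₃, U₄)` on a process comb:
`q_i = (1/d) Tr[J (I_A ⊗ ((U₃⊗U₄)|Φ_i⟩⟨Φ_i|(U₃⊗U₄)†)_{BC})]`. -/
def dcProb {d : ℕ} (U₃ U₄ : Matrix (Fin d) (Fin d) ℂ)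
    (Φ : Fin (d * d) → Fin d × Fin d → ℂ) (J : PMat d d d) : Fin (d * d) → ℝ :=
  fun i => (1 / d) * prob J (embBC (projMat (kronVec U₃ U₄ (Φ i))))


section AuxEigen

variable {d : ℕ}

private lemma kronVec_one_one (φ : Fin d × Fin d → ℂ) :
    kronVec (1 : Matrix (Fin d) (Fin d) ℂ) 1 φ = φ := by
  funext x
  simp [kronVec, Matrix.one_apply, Fintype.sum_prod_type, ite_and]

private lemma embAC_mul (M N : Matrix (Fin d × Fin d) (Fin d × Fin d) ℂ) :
    embAC M * embAC N = embAC (M * N) := by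
  ext ⟨a, b, c⟩ ⟨a', b', c'⟩
  simp only [embAC, Matrix.mul_apply, Matrix.of_apply, Fintype.sum_prod_type,
    mul_ite, ite_mul, mul_one, one_mul, mul_zero, zero_mul,
    Finset.sum_ite_eq, Finset.sum_ite_eq', Finset.mem_univ, if_true]
  by_cases hb : b = b'
  · subst hb; simp
  · simp [hb]

private lemma projMat_idem {φ : Fin d × Fin d → ℂ}
    (h : ∑ x : Fin d × Fin d, (starRingEnd ℂ) (φ x) * φ x = 1) :
    projMat φ * projMat φ = projMat φ := by
  ext x y
  simp only [projMat, Matrix.mul_apply, Matrix.of_apply]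
  have e : ∀ z : Fin d × Fin d, (φ x * (starRingEnd ℂ) (φ z)) * (φ z * (starRingEnd ℂ) (φ y))
      = ((starRingEnd ℂ) (φ z) * φ z) * (φ x * (starRingEnd ℂ) (φ y)) := by intro z; ring
  simp_rw [e, ← Finset.sum_mul, h, one_mul]

private lemma embAC_projMat_herm (φ : Fin d × Fin d → ℂ) :
    (embAC (projMat φ))ᴴ = embAC (projMat φ) := by
  ext ⟨a, b, c⟩ ⟨a', b', c'⟩
  simp only [embAC, projMat, Matrix.conjTranspose_apply, Matrix.of_apply, _root_.map_mul,
    Complex.conj_conj, apply_ite, _root_.map_one, map_zero]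
  by_cases hb : b = b'
  · subst hb; simp; ring
  · have hb' : ¬ b' = b := fun h => hb h.symm
    simp [hb, hb']

private lemma sum_delta_mid (b : Fin d) (f : PIdx d d d → ℂ) :
    (∑ y : PIdx d d d, if b = y.2.1 then f y else 0)
      = ∑ x : Fin d, ∑ z : Fin d, f (x, b, z) := by
  rw [Fintype.sum_prod_type]
  refine Finset.sum_congr rfl fun x _ => ?_
  rw [Fintype.sum_prod_type_right]
  simp

private lemma sum_delta_mid' (b : Fin d) (f : PIdx d d d → ℂ) :
    (∑ y : PIdx d d d, if y.2.1 = b then f y else 0)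
      = ∑ x : Fin d, ∑ z : Fin d, f (x, b, z) := by
  rw [Fintype.sum_prod_type]
  refine Finset.sum_congr rfl fun x _ => ?_
  rw [Fintype.sum_prod_type_right]
  simp

private lemma sandwich_entry (φ : Fin d × Fin d → ℂ) (J : PMat d d d)
    (a b c a' b' c' : Fin d) :
    (embAC (projMat φ) * (J * embAC (projMat φ))) (a, b, c) (a', b', c')
      = φ (a, c) * (starRingEnd ℂ) (φ (a', c')) *
        ∑ x : Fin d, ∑ z : Fin d, ∑ u : Fin d, ∑ w : Fin d,
          (starRingEnd ℂ) (φ (x, z)) * J (x, b, z) (u, b', w) * φ (u, w) := by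
  simp only [Matrix.mul_apply, embAC, projMat, Matrix.of_apply, mul_ite, ite_mul,
    mul_one, one_mul, mul_zero, zero_mul]
  simp only [sum_delta_mid, sum_delta_mid']
  simp only [Finset.mul_sum, Finset.sum_mul]
  refine Finset.sum_congr rfl fun x _ => Finset.sum_congr rfl fun z _ => ?_
  refine Finset.sum_congr rfl fun u _ => Finset.sum_congr rfl fun w _ => by ring

end AuxEigen

/-- eigencircuits of the maximal common-cause indicator: a process comb
`J` gives outcome `j` with probability one under the common-cause indicator (with
identity unitaries) iff `J = |Φ_j⟩⟨Φ_j|_{AC} ⊗ I_B`. -/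
theorem common_cause_indicator_eigencircuits {d : ℕ} (hd : 2 ≤ d)
    (Φ : Fin (d * d) → Fin d × Fin d → ℂ) (hΦ : IsMaxEntBasis Φ)
    (j : Fin (d * d)) (J : PMat d d d) (hJ : IsProcessComb J) :
    ccProb 1 1 Φ J j = 1 ↔ J = embAC (projMat (Φ j)) := by
  obtain ⟨hpsd, ρ, hρpsd, hρtr, hcomb⟩ := hJ
  have hd0 : (d : ℝ) ≠ 0 := Nat.cast_ne_zero.mpr (by omega)
  have hd0' : (d : ℂ) ≠ 0 := Nat.cast_ne_zero.mpr (by omega)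
  have hnorm : ∑ x : Fin d × Fin d, (starRingEnd ℂ) (Φ j x) * Φ j x = 1 := by
    simpa using hΦ.1 j j
  have hTT : embAC (projMat (Φ j)) * embAC (projMat (Φ j)) = embAC (projMat (Φ j)) := by
    rw [embAC_mul, projMat_idem hnorm]
  have hTH : (embAC (projMat (Φ j)))ᴴ = embAC (projMat (Φ j)) := embAC_projMat_herm _
  have htrρ : ∑ a : Fin d, ρ a a = 1 := by simpa [Matrix.trace, Matrix.diag] using hρtr
  have hcombE : ∀ a a' b b', (∑ c : Fin d, J (a, b, c) (a', b', c))
      = ρ a a' * (if b = b' then (1 : ℂ) else 0) := by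
    intro a a' b b'
    have := congrFun (congrFun hcomb (a, b)) (a', b')
    simpa [trC] using this
  constructor
  · intro hp
    have hTrJ : J.trace = (d : ℂ) := by
      have h1 : J.trace = ∑ a : Fin d, ∑ b : Fin d, ∑ c : Fin d, J (a, b, c) (a, b, c) := by
        simp [Matrix.trace, Matrix.diag, Fintype.sum_prod_type]
      have h2 : ∀ a b : Fin d, (∑ c : Fin d, J (a, b, c) (a, b, c)) = ρ a a := by
        intro a b; simpa using hcombE a a b b
      rw [h1]
      simp_rw [h2]
      simp [Finset.sum_const, htrρ, ← Finset.sum_mul, mul_comm]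
    have hre : ((J * embAC (projMat (Φ j))).trace).re = (d : ℝ) := by
      simp only [ccProb, prob, kronVec_one_one] at hp
      field_simp at hp
      linarith
    set T := embAC (projMat (Φ j)) with hT
    have hQQ : ((1 : PMat d d d) - T) * ((1 : PMat d d d) - T) = 1 - T := by
      have e1 : ((1 : PMat d d d) - T) * ((1 : PMat d d d) - T) = 1 - T - T + T * T := by
        noncomm_ring
      rw [e1, hTT]
      abel
    have hQH : ((1 : PMat d d d) - T)ᴴ = 1 - T := by
      simp [hTH]
    set A := (open scoped MatrixOrder in CFC.sqrt J) with hA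
    have hAA : A * A = J := (open scoped MatrixOrder in CFC.sqrt_mul_sqrt_self J hpsd.nonneg)
    have hAH : Aᴴ = A := (open scoped MatrixOrder in (CFC.sqrt_nonneg J).posSemidef.1)
    set B := A * ((1 : PMat d d d) - T) with hB
    have htr : (J * ((1 : PMat d d d) - T)).trace = (Bᴴ * B).trace := by
      have h1 : Bᴴ * B = ((1 : PMat d d d) - T) * (J * ((1 : PMat d d d) - T)) := by
        rw [hB, conjTranspose_mul, hQH, hAH, Matrix.mul_assoc, ← Matrix.mul_assoc A A, hAA]
      rw [h1]
      conv_rhs => rw [Matrix.trace_mul_comm, Matrix.mul_assoc, hQQ]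
    have hretr0 : ((J * ((1 : PMat d d d) - T)).trace).re = 0 := by
      have e1 : J * ((1 : PMat d d d) - T) = J - J * T := by
        rw [Matrix.mul_sub, Matrix.mul_one]
      rw [e1, Matrix.trace_sub, Complex.sub_re, hTrJ, hre]
      simp
    have hsum : ∑ p : PIdx d d d, ∑ q : PIdx d d d, Complex.normSq (B q p) = 0 := by
      have h2 : (Bᴴ * B).trace
          = ((∑ p : PIdx d d d, ∑ q : PIdx d d d, Complex.normSq (B q p) : ℝ) : ℂ) := by
        push_cast
        simp only [Matrix.trace, Matrix.diag, Matrix.mul_apply, Matrix.conjTranspose_apply]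
        refine Finset.sum_congr rfl fun p _ => Finset.sum_congr rfl fun q _ => ?_
        rw [mul_comm, Complex.star_def, Complex.mul_conj]
      have := hretr0
      rw [htr, h2] at this
      simpa using this
    have hB0 : B = 0 := by
      ext p q
      have h1 := (Finset.sum_eq_zero_iff_of_nonneg
        (fun i _ => Finset.sum_nonneg fun k _ => Complex.normSq_nonneg _)).mp hsum q
        (Finset.mem_univ _)
      have h2 := (Finset.sum_eq_zero_iff_of_nonneg
        (fun k _ => Complex.normSq_nonneg _)).mp h1 p (Finset.mem_univ _)
      simpa using Complex.normSq_eq_zero.mp h2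
    have hJQ : J * ((1 : PMat d d d) - T) = 0 := by
      have e1 : J * ((1 : PMat d d d) - T) = A * B := by
        rw [hB, ← Matrix.mul_assoc, hAA]
      rw [e1, hB0, Matrix.mul_zero]
    have hJT : J * T = J := by
      rw [Matrix.mul_sub, Matrix.mul_one, sub_eq_zero] at hJQ
      exact hJQ.symm
    have hTJ : T * J = J := by
      have h1 : (J * T)ᴴ = T * J := by rw [conjTranspose_mul, hTH, hpsd.1]
      rw [hJT, hpsd.1] at h1
      exact h1.symm
    have hrepr : J = T * (J * T) := by
      conv_lhs => rw [← hTJ, ← hJT]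
    obtain ⟨S, hentry⟩ : ∃ S : Fin d → Fin d → ℂ, ∀ a b c a' b' c' : Fin d,
        J (a, b, c) (a', b', c')
          = Φ j (a, c) * (starRingEnd ℂ) (Φ j (a', c')) * S b b' := by
      refine ⟨fun b b' => ∑ x : Fin d, ∑ z : Fin d, ∑ u : Fin d, ∑ w : Fin d,
        (starRingEnd ℂ) (Φ j (x, z)) * J (x, b, z) (u, b', w) * Φ j (u, w),
        fun a b c a' b' c' => ?_⟩
      conv_lhs => rw [hrepr]
      exact sandwich_entry (Φ j) J a b c a' b' c'
    have hSdelta : ∀ b b', S b b' = if b = b' then (1 : ℂ) else 0 := by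
      intro b b'
      have key : ∀ a : Fin d, ((1 : ℂ) / d) * S b b'
          = ρ a a * (if b = b' then (1 : ℂ) else 0) := by
        intro a
        have h1 := hcombE a a b b'
        simp only [hentry] at h1
        rw [← Finset.sum_mul, hΦ.2.1 j a a] at h1
        simpa using h1
      have hsum2 : ∑ _a : Fin d, ((1 : ℂ) / d) * S b b'
          = ∑ a : Fin d, ρ a a * (if b = b' then (1 : ℂ) else 0) :=
        Finset.sum_congr rfl fun a _ => key a
      have hL : ∑ _a : Fin d, ((1 : ℂ) / d) * S b b' = S b b' := by
        rw [Finset.sum_const, Finset.card_univ, Fintype.card_fin, nsmul_eq_mul]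
        field_simp
      have hR : ∑ a : Fin d, ρ a a * (if b = b' then (1 : ℂ) else 0)
          = if b = b' then (1 : ℂ) else 0 := by
        rw [← Finset.sum_mul, htrρ, one_mul]
      rw [hL, hR] at hsum2
      exact hsum2
    ext ⟨a, b, c⟩ ⟨a', b', c'⟩
    rw [hentry a b c a' b' c', hSdelta]
    simp [hT, embAC, projMat]
  · rintro rfl
    have hTrT : (embAC (projMat (Φ j))).trace = (d : ℂ) := by
      have h1 : (embAC (projMat (Φ j))).trace
          = ∑ a : Fin d, ∑ b : Fin d, ∑ c : Fin d, Φ j (a, c) * (starRingEnd ℂ) (Φ j (a, c)) := by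
        simp [Matrix.trace, Matrix.diag, embAC, projMat, Fintype.sum_prod_type]
      have h2 : ∑ a : Fin d, ∑ c : Fin d, Φ j (a, c) * (starRingEnd ℂ) (Φ j (a, c)) = 1 := by
        simpa [Fintype.sum_prod_type, mul_comm] using hΦ.1 j j
      rw [h1, Finset.sum_comm]
      calc ∑ _b : Fin d, ∑ a : Fin d, ∑ c : Fin d, Φ j (a, c) * (starRingEnd ℂ) (Φ j (a, c))
          = ∑ _b : Fin d, (1 : ℂ) := Finset.sum_congr rfl fun b _ => h2
        _ = (d : ℂ) := by simp
    simp only [ccProb, prob, kronVec_one_one, hTT, hTrT]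
    simp [Complex.natCast_re]
    field_simp
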